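/- Let R be a commutative ring, let x, t ∈ R, let λ = (λ_1 > ⋯ > λ_n ≥ 1) be a strict partition of length n and μ = (μ_1 > ⋯ > μ_{n-1} ≥ 1) a strict partition of length n−1, and set μ_n = 0. Define h : ℤ → R by h_m = 0 for m < 0, h_0 = 1, and h_m = (1+t)·x^m for m ≥ 1 (so h_m is the coefficient of z^m in (1+t·x·z)/(1−x·z)). Then the n×n determinant det_{1≤p,q≤n}( h_{λ_q − μ_p} ) equals t^{r(λ;μ)} · (1+t)^{s(λ;μ)−r(λ;μ)+1} · x^{|λ|−|μ|} if μ interleaves λ, and equals 0 otherwise. (This is the paper's Jacobi–Trudi-type determinant expression for the Δ one-row Boltzmann weight, obtained by combining Theorem 1 with the appendix Proposition identifying this weight with a one-variable supersymmetric skew Schur function.) -/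

import Mathlib

/-- the Jacobi–Trudi type determinant expression for the Δ one-row weight.
`lam` is a strict partition of length `m+1` (all parts ≥ 1) and `mu` is a strict
partition of length `m` padded with a final part `0`.  `h k` is the coefficient of
`z^k` in `(1 + t x z)/(1 - x z)`. -/
theorem stmt1 {R : Type*} [CommRing R] (m : ℕ) (x t : R)
    (lam mu : Fin (m + 1) → ℕ)
    (hlam : StrictAnti lam) (hlam1 : ∀ i, 1 ≤ lam i)
    (hmu : StrictAnti mu) (hmu0 : mu (Fin.last m) = 0)
    (h : ℤ → R)
    (hneg : ∀ k : ℤ, k < 0 → h k = 0) (hzero : h 0 = 1)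
    (hpos : ∀ k : ℤ, 0 < k → h k = (1 + t) * x ^ k.toNat) :
    (((∀ i : Fin m, mu i.castSucc ≤ lam i.castSucc ∧ lam i.succ ≤ mu i.castSucc) →
      Matrix.det (Matrix.of fun p q : Fin (m + 1) => h ((lam q : ℤ) - (mu p : ℤ)))
        = t ^ (Finset.univ.filter (fun i : Fin m => mu i.castSucc = lam i.succ)).card *
          (1 + t) ^
            ((Finset.univ.filter (fun i : Fin m => mu i.castSucc < lam i.castSucc)).card
              - (Finset.univ.filter (fun i : Fin m => mu i.castSucc = lam i.succ)).card + 1) *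
          x ^ ((∑ i, lam i) - (∑ i, mu i))) ∧
    ((¬ ∀ i : Fin m, mu i.castSucc ≤ lam i.castSucc ∧ lam i.succ ≤ mu i.castSucc) →
      Matrix.det (Matrix.of fun p q : Fin (m + 1) => h ((lam q : ℤ) - (mu p : ℤ))) = 0)) := by
  classical
  set M : Matrix (Fin (m+1)) (Fin (m+1)) R :=
    Matrix.of fun p q : Fin (m + 1) => h ((lam q : ℤ) - (mu p : ℤ)) with hM
  set U : Matrix (Fin (m+1)) (Fin (m+1)) R :=
    fun j q => (if j = q then (1:R) else 0)
      + (if (j : ℕ) = (q : ℕ) + 1 then -(x ^ (lam q - lam j)) else 0) with hUdef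
  -- U is lower triangular with unit diagonal
  have hUtri : U.BlockTriangular OrderDual.toDual := by
    intro i j hij
    have hij' : (i : ℕ) < (j : ℕ) := by
      have : i < j := hij
      exact this
    show (if i = j then (1:R) else 0)
      + (if (i : ℕ) = (j : ℕ) + 1 then -(x ^ (lam j - lam i)) else 0) = 0
    rw [if_neg (by intro hh; subst hh; omega), if_neg (by omega)]
    ring
  have hUdet : U.det = 1 := by
    rw [Matrix.det_of_lowerTriangular U hUtri]
    apply Finset.prod_eq_one
    intro i _
    show (if i = i then (1:R) else 0)
      + (if (i : ℕ) = (i : ℕ) + 1 then -(x ^ (lam i - lam i)) else 0) = 1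
    rw [if_pos rfl, if_neg (by omega)]
    ring
  -- entries of M * U
  have hmul : ∀ (p : Fin (m+1)) (q : Fin m),
      (M * U) p q.castSucc
        = M p q.castSucc - x ^ (lam q.castSucc - lam q.succ) * M p q.succ := by
    intro p q
    rw [Matrix.mul_apply]
    have hsplit : ∀ j : Fin (m+1), M p j * U j q.castSucc
        = (M p j * if j = q.castSucc then (1:R) else 0)
          + (M p j * if (j : ℕ) = (q.castSucc : ℕ) + 1 then -(x ^ (lam q.castSucc - lam j)) else 0) := by
      intro j; rw [hUdef]; ring
    rw [Finset.sum_congr rfl (fun j _ => hsplit j), Finset.sum_add_distrib]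
    have e1 : (∑ j : Fin (m+1), M p j * if j = q.castSucc then (1:R) else 0) = M p q.castSucc := by
      rw [Finset.sum_eq_single q.castSucc]
      · rw [if_pos rfl, mul_one]
      · intro j _ hj; rw [if_neg hj, mul_zero]
      · intro hmem; exact absurd (Finset.mem_univ _) hmem
    have e2 : (∑ j : Fin (m+1), M p j *
        if (j : ℕ) = (q.castSucc : ℕ) + 1 then -(x ^ (lam q.castSucc - lam j)) else 0)
        = -(x ^ (lam q.castSucc - lam q.succ) * M p q.succ) := by
      rw [Finset.sum_eq_single q.succ]
      · rw [if_pos (by simp), ]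
        ring
      · intro j _ hj
        rw [if_neg, mul_zero]
        intro hh
        apply hj
        apply Fin.ext
        rw [hh]
        simp
      · intro hmem; exact absurd (Finset.mem_univ _) hmem
    rw [e1, e2]
    ring
  have hmullast : ∀ p : Fin (m+1), (M * U) p (Fin.last m) = M p (Fin.last m) := by
    intro p
    rw [Matrix.mul_apply]
    rw [Finset.sum_eq_single (Fin.last m)]
    · show M p (Fin.last m) * ((if (Fin.last m) = (Fin.last m) then (1:R) else 0)
        + (if ((Fin.last m : Fin (m+1)) : ℕ) = ((Fin.last m : Fin (m+1)) : ℕ) + 1 then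
            -(x ^ (lam (Fin.last m) - lam (Fin.last m))) else 0)) = M p (Fin.last m)
      rw [if_pos rfl, if_neg (by omega)]
      ring
    · intro j _ hj
      show M p j * ((if j = (Fin.last m) then (1:R) else 0)
        + (if (j : ℕ) = ((Fin.last m : Fin (m+1)) : ℕ) + 1 then
            -(x ^ (lam (Fin.last m) - lam j)) else 0)) = 0
      have hjlt : (j : ℕ) < m + 1 := j.isLt
      have hlv : ((Fin.last m : Fin (m+1)) : ℕ) = m := Fin.val_last m
      rw [if_neg hj, if_neg (by omega)]
      ring
    · intro hmem; exact absurd (Finset.mem_univ _) hmem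
  -- the key entry computation
  have hentry : ∀ (p : Fin (m+1)) (q : Fin m),
      (M * U) p q.castSucc =
        if lam q.succ ≤ mu p ∧ mu p ≤ lam q.castSucc then
          (if mu p = lam q.castSucc then 1
           else if mu p = lam q.succ then t else (1+t)) * x ^ (lam q.castSucc - mu p)
        else 0 := by
    intro p q
    rw [hmul p q]
    have hMa : M p q.castSucc = h ((lam q.castSucc : ℤ) - (mu p : ℤ)) := rfl
    have hMb : M p q.succ = h ((lam q.succ : ℤ) - (mu p : ℤ)) := rfl
    rw [hMa, hMb]
    set a := lam q.castSucc with ha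
    set b := lam q.succ with hb
    set u := mu p with hu
    have hba : b < a := hlam (Fin.castSucc_lt_succ : q.castSucc < q.succ)
    have hb1 : 1 ≤ b := hlam1 _
    rcases lt_trichotomy u b with hub | hub | hub
    · -- u < b < a :  both entries positive region, cancellation
      rw [hpos ((a:ℤ) - (u:ℤ)) (by omega), hpos ((b:ℤ) - (u:ℤ)) (by omega)]
      rw [if_neg (by omega)]
      rw [show ((a:ℤ) - (u:ℤ)).toNat = a - u by omega,
        show ((b:ℤ) - (u:ℤ)).toNat = b - u by omega]
      rw [show a - u = (a - b) + (b - u) by omega, pow_add]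
      ring
    · -- u = b
      rw [show ((b:ℤ) - (u:ℤ)) = 0 by omega, hzero]
      rw [hpos ((a:ℤ) - (u:ℤ)) (by omega)]
      rw [if_pos ⟨le_of_eq hub.symm, by omega⟩, if_neg (by omega), if_pos hub]
      rw [show ((a:ℤ) - (u:ℤ)).toNat = a - u by omega]
      rw [show a - b = a - u by omega]
      ring
    · rcases lt_trichotomy u a with hua | hua | hua
      · -- b < u < a
        rw [hpos ((a:ℤ) - (u:ℤ)) (by omega), hneg ((b:ℤ) - (u:ℤ)) (by omega)]
        rw [if_pos ⟨by omega, by omega⟩, if_neg (by omega), if_neg (by omega)]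
        rw [show ((a:ℤ) - (u:ℤ)).toNat = a - u by omega]
        ring
      · -- u = a
        rw [hneg ((b:ℤ) - (u:ℤ)) (by omega), show ((a:ℤ) - (u:ℤ)) = 0 by omega, hzero]
        rw [if_pos ⟨by omega, by omega⟩, if_pos hua]
        rw [show a - u = 0 by omega]
        ring
      · -- u > a
        rw [hneg ((a:ℤ) - (u:ℤ)) (by omega), hneg ((b:ℤ) - (u:ℤ)) (by omega), if_neg (by omega)]
        ring
  -- the minor
  set N : Matrix (Fin m) (Fin m) R := Matrix.of fun p q : Fin m =>
    if lam q.succ ≤ mu p.castSucc ∧ mu p.castSucc ≤ lam q.castSucc then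
      (if mu p.castSucc = lam q.castSucc then 1
       else if mu p.castSucc = lam q.succ then t else (1+t)) * x ^ (lam q.castSucc - mu p.castSucc)
    else 0 with hNdef
  have hminor : ((M * U).submatrix (Fin.last m).succAbove (Fin.last m).succAbove) = N := by
    funext p q
    show (M * U) ((Fin.last m).succAbove p) ((Fin.last m).succAbove q) = N p q
    rw [Fin.succAbove_last_apply, Fin.succAbove_last_apply]
    exact hentry p.castSucc q
  have hlastrow : ∀ q : Fin m, (M * U) (Fin.last m) q.castSucc = 0 := by
    intro q
    rw [hentry]
    rw [if_neg]
    intro hh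
    have := hlam1 q.succ
    omega
  have hMll : M (Fin.last m) (Fin.last m) = (1 + t) * x ^ (lam (Fin.last m)) := by
    show h ((lam (Fin.last m) : ℤ) - (mu (Fin.last m) : ℤ)) = _
    have h1 := hlam1 (Fin.last m)
    rw [hpos _ (by omega)]
    rw [show ((lam (Fin.last m) : ℤ) - (mu (Fin.last m) : ℤ)).toNat = lam (Fin.last m) by omega]
  have hdetM : M.det = ((1 + t) * x ^ (lam (Fin.last m))) * N.det := by
    have h1 : M.det = (M * U).det := by rw [Matrix.det_mul, hUdet, mul_one]
    rw [h1, Matrix.det_succ_row (M * U) (Fin.last m)]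
    rw [Finset.sum_eq_single (Fin.last m)]
    · rw [hminor, hmullast, hMll]
      have hsign : ((-1 : R)) ^ ((Fin.last m : ℕ) + (Fin.last m : ℕ)) = 1 := by
        rw [← two_mul, pow_mul]
        simp
      rw [hsign]
      ring
    · intro j _ hj
      have : ∃ q : Fin m, q.castSucc = j := by
        refine ⟨j.castPred hj, ?_⟩
        simp
      obtain ⟨q, rfl⟩ := this
      rw [hlastrow q]
      ring
    · intro hmem; exact absurd (Finset.mem_univ _) hmem
  -- det N is the product of the diagonal
  have key : ∀ σ : Equiv.Perm (Fin m), σ ≠ 1 →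
      ∃ c : Fin m, ¬(lam c.succ ≤ mu ((σ c).castSucc) ∧ mu ((σ c).castSucc) ≤ lam c.castSucc) := by
    intro σ hσ
    by_contra hcon
    push_neg at hcon
    have hne : (Finset.univ.filter fun c : Fin m => σ c ≠ c).Nonempty := by
      by_contra hemp
      apply hσ
      apply Equiv.ext
      intro c
      by_contra hc
      exact hemp ⟨c, Finset.mem_filter.mpr ⟨Finset.mem_univ _, by simpa using hc⟩⟩
    set c₀ := (Finset.univ.filter fun c : Fin m => σ c ≠ c).min' hne with hc₀def
    have hc₀mem : σ c₀ ≠ c₀ :=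
      (Finset.mem_filter.mp (Finset.min'_mem _ hne)).2
    have hfix : ∀ c, c < c₀ → σ c = c := by
      intro c hc
      by_contra hcc
      exact absurd (Finset.min'_le _ c (Finset.mem_filter.mpr ⟨Finset.mem_univ _, hcc⟩))
        (not_le.mpr hc)
    have h1 : c₀ < σ c₀ := by
      rcases lt_trichotomy (σ c₀) c₀ with hh | hh | hh
      · exact absurd (σ.injective (hfix _ hh)) hc₀mem
      · exact absurd hh hc₀mem
      · exact hh
    set c' := σ.symm c₀ with hc'def
    have hc'σ : σ c' = c₀ := σ.apply_symm_apply c₀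
    have h2 : c₀ < c' := by
      rcases lt_trichotomy c' c₀ with hh | hh | hh
      · rw [hfix c' hh] at hc'σ
        rw [hc'σ] at hh
        exact absurd hh (lt_irrefl _)
      · rw [hh] at hc'σ
        exact absurd hc'σ hc₀mem
      · exact hh
    have A1 : lam c₀.succ ≤ mu ((σ c₀).castSucc) := (hcon c₀).1
    have A2 : mu c₀.castSucc ≤ lam c'.castSucc := by
      have := (hcon c').2
      rwa [hc'σ] at this
    have A3 : lam c'.castSucc ≤ lam c₀.succ := by
      apply hlam.antitone
      have : (c₀ : ℕ) < (c' : ℕ) := h2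
      rw [Fin.le_def]
      simpa using this
    have A4 : mu ((σ c₀).castSucc) < mu c₀.castSucc := by
      apply hmu
      exact Fin.castSucc_lt_castSucc_iff.mpr h1
    omega
  have hNdet : N.det = ∏ p : Fin m, N p p := by
    rw [Matrix.det_apply]
    rw [Finset.sum_eq_single (1 : Equiv.Perm (Fin m))]
    · simp
    · intro σ _ hσ
      obtain ⟨c, hc⟩ := key σ hσ
      have hz : N (σ c) c = 0 := by
        show (if lam c.succ ≤ mu ((σ c).castSucc) ∧ mu ((σ c).castSucc) ≤ lam c.castSucc then
            (if mu ((σ c).castSucc) = lam c.castSucc then 1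
             else if mu ((σ c).castSucc) = lam c.succ then t else (1+t))
              * x ^ (lam c.castSucc - mu ((σ c).castSucc)) else 0) = 0
        rw [if_neg hc]
      have hz2 : (∏ i : Fin m, N (σ i) i) = 0 :=
        Finset.prod_eq_zero (Finset.mem_univ c) hz
      rw [hz2, smul_zero]
    · intro hmem; exact absurd (Finset.mem_univ _) hmem
  constructor
  · -- interleaving case
    intro hint
    have hdiagval : ∀ p : Fin m, N p p =
        (t ^ (if mu p.castSucc = lam p.succ then 1 else 0)
          * (1+t) ^ (if mu p.castSucc < lam p.castSucc ∧ ¬(mu p.castSucc = lam p.succ)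
              then 1 else 0))
          * x ^ (lam p.castSucc - mu p.castSucc) := by
      intro p
      obtain ⟨hle, hge⟩ := hint p
      show (if lam p.succ ≤ mu p.castSucc ∧ mu p.castSucc ≤ lam p.castSucc then
          (if mu p.castSucc = lam p.castSucc then 1
           else if mu p.castSucc = lam p.succ then t else (1+t))
            * x ^ (lam p.castSucc - mu p.castSucc) else 0) = _
      rw [if_pos ⟨hge, hle⟩]
      have hba : lam p.succ < lam p.castSucc := hlam (Fin.castSucc_lt_succ : p.castSucc < p.succ)
      congr 1
      by_cases h1 : mu p.castSucc = lam p.castSucc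
      · rw [if_pos h1, if_neg (by omega), if_neg (by omega)]
        ring
      · rw [if_neg h1]
        by_cases h2 : mu p.castSucc = lam p.succ
        · rw [if_pos h2, if_pos h2, if_neg (by omega)]
          ring
        · rw [if_neg h2, if_neg h2, if_pos ⟨lt_of_le_of_ne hle h1, h2⟩]
          ring
    have hprod : ∏ p : Fin m, N p p =
        t ^ (Finset.univ.filter (fun i : Fin m => mu i.castSucc = lam i.succ)).card
        * (1+t) ^ (Finset.univ.filter
            (fun i : Fin m => mu i.castSucc < lam i.castSucc ∧ ¬(mu i.castSucc = lam i.succ))).card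
        * x ^ (∑ p : Fin m, (lam p.castSucc - mu p.castSucc)) := by
      rw [Finset.prod_congr rfl (fun p _ => hdiagval p)]
      rw [Finset.prod_mul_distrib, Finset.prod_mul_distrib]
      rw [Finset.prod_pow_eq_pow_sum, Finset.prod_pow_eq_pow_sum, Finset.prod_pow_eq_pow_sum]
      rw [Finset.card_filter, Finset.card_filter]
    -- rewrite the (1+t) exponent as s - r
    have hBsubA : (Finset.univ.filter (fun i : Fin m => mu i.castSucc = lam i.succ))
        ⊆ (Finset.univ.filter (fun i : Fin m => mu i.castSucc < lam i.castSucc)) := by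
      intro p hp
      rw [Finset.mem_filter] at hp ⊢
      refine ⟨Finset.mem_univ _, ?_⟩
      have hba : lam p.succ < lam p.castSucc := hlam (Fin.castSucc_lt_succ : p.castSucc < p.succ)
      omega
    have hcardC : (Finset.univ.filter
        (fun i : Fin m => mu i.castSucc < lam i.castSucc ∧ ¬(mu i.castSucc = lam i.succ))).card
        = (Finset.univ.filter (fun i : Fin m => mu i.castSucc < lam i.castSucc)).card
          - (Finset.univ.filter (fun i : Fin m => mu i.castSucc = lam i.succ)).card := by
      rw [← Finset.card_sdiff_of_subset hBsubA]
      congr 1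
      ext p
      simp only [Finset.mem_sdiff, Finset.mem_filter, Finset.mem_univ, true_and]
    -- exponent of x
    have hsumle : (∑ p : Fin m, mu p.castSucc) ≤ ∑ p : Fin m, lam p.castSucc :=
      Finset.sum_le_sum (fun p _ => (hint p).1)
    have hsumsub : (∑ p : Fin m, (lam p.castSucc - mu p.castSucc))
        = (∑ p : Fin m, lam p.castSucc) - ∑ p : Fin m, mu p.castSucc :=
      Finset.sum_tsub_distrib _ (fun p _ => (hint p).1)
    have hsuml : (∑ i, lam i) = (∑ p : Fin m, lam p.castSucc) + lam (Fin.last m) :=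
      Fin.sum_univ_castSucc lam
    have hsumm : (∑ i, mu i) = ∑ p : Fin m, mu p.castSucc := by
      rw [Fin.sum_univ_castSucc mu, hmu0, add_zero]
    have hexp : lam (Fin.last m) + (∑ p : Fin m, (lam p.castSucc - mu p.castSucc))
        = (∑ i, lam i) - (∑ i, mu i) := by
      rw [hsumsub, hsuml, hsumm]
      omega
    rw [hdetM, hNdet, hprod, hcardC]
    rw [← hexp, pow_add]
    ring
  · -- non-interleaving case
    intro hnint
    push_neg at hnint
    obtain ⟨i, hi⟩ := hnint
    have hNii : N i i = 0 := by
      show (if lam i.succ ≤ mu i.castSucc ∧ mu i.castSucc ≤ lam i.castSucc then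
          (if mu i.castSucc = lam i.castSucc then 1
           else if mu i.castSucc = lam i.succ then t else (1+t))
            * x ^ (lam i.castSucc - mu i.castSucc) else 0) = 0
      rw [if_neg]
      intro hh
      have h1 := hh.1
      have h2 := hi hh.2
      omega
    have hz2 : (∏ p : Fin m, N p p) = 0 :=
      Finset.prod_eq_zero (Finset.mem_univ i) hNii
    rw [hdetM, hNdet, hz2, mul_zero]
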